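/- For multisegments, if ε_i(M) + ε_i*(M) + ⟨wt(M), α_i^∨⟩ ≥ 1, then ε_i*(f_i(M)) = ε_i*(M) and ε_i(f_i*(M)) = ε_i(M). -/

import Mathlib

/-- A segment `[a,b]` is a pair of integers. -/
abbrev Seg : Type := ℕ × ℕ

/-- A multisegment is a finite multiset of segments. -/
abbrev MS : Type := Multiset Seg

/-- `M ∈ MS_n`: all segments `[a,b]` satisfy `1 ≤ a ≤ b ≤ n`. -/
def IsMS (n : ℕ) (M : MS) : Prop := ∀ s ∈ M, 1 ≤ s.1 ∧ s.1 ≤ s.2 ∧ s.2 ≤ n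

/-- A bracket: `op` = "(", `cl` = ")". -/
inductive Br | op | cl
deriving DecidableEq

/-- One step of the left-to-right bracket cancellation procedure.  The state
`(cls, ops)` records the tags of the currently uncanceled ")" (in order) and the
currently uncanceled "(" (in order).  A new "(" is appended to `ops`; a new ")"
cancels the last uncanceled "(" if there is one, and otherwise is appended to `cls`. -/
def step {τ : Type} : (List τ × List τ) → (Br × τ) → (List τ × List τ)
  | (cls, ops), (Br.op, s) => (cls, ops ++ [s])
  | (cls, ops), (Br.cl, s) => if ops.isEmpty then (cls ++ [s], ops) else (cls, ops.dropLast)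

/-- Process a tagged bracket string; the result `(cls, ops)` lists the tags of the
uncanceled ")" and the uncanceled "(" (left to right).  The reduced (uncanceled)
string is `")"^cls.length ++ "("^ops.length`. -/
def scan {τ : Type} (l : List (Br × τ)) : List τ × List τ := l.foldl step ([], [])

/-- Number of uncanceled ")" in a tagged bracket string. -/
def urStr {τ : Type} (l : List (Br × τ)) : ℕ := (scan l).1.length

/-- Number of uncanceled "(" in a tagged bracket string. -/
def epsStr {τ : Type} (l : List (Br × τ)) : ℕ := (scan l).2.length

/-- Tag of the rightmost uncanceled ")", if any. -/
def lastCl {τ : Type} (l : List (Br × τ)) : Option τ := (scan l).1.getLast?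

/-- Tag of the leftmost uncanceled "(", if any. -/
def headOp {τ : Type} (l : List (Br × τ)) : Option τ := (scan l).2.head?

/-- The string `S_i(M)`: segments are ordered by increasing height, then by
decreasing lower endpoint; each `[h,i]` contributes "(" and each `[h,i-1]`
contributes ")".  In the block of segments of height `t` the "(" over the
`[i-t+1, i]` segments come immediately before the ")" over the `[i-t, i-1]`
segments, and blocks appear for `t = 1, 2, …`. -/
def Si (M : MS) (i : ℕ) : List (Br × Seg) :=
  (List.range i).flatMap fun t0 =>
    let t := t0 + 1
    List.replicate (M.count (i - t + 1, i)) (Br.op, ((i - t + 1 : ℕ), i)) ++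
    List.replicate (M.count (i - t, i - 1)) (Br.cl, ((i - t : ℕ), i - 1))

/-- The string `S_i^*(M)`: segments ordered by increasing height, then by
increasing lower endpoint; each `[i,j]` contributes "(" and each `[i+1,j]`
contributes ")".  In the block of height `t` the "(" below the `[i, i+t-1]`
segments come immediately before the ")" below the `[i+1, i+t]` segments. -/
def SiStar (n : ℕ) (M : MS) (i : ℕ) : List (Br × Seg) :=
  (List.range n).flatMap fun t0 =>
    let t := t0 + 1
    List.replicate (M.count (i, i + t - 1)) (Br.op, (i, i + t - 1)) ++
    List.replicate (M.count (i + 1, i + t)) (Br.cl, (i + 1, i + t))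

/-- The crystal operator `f_i` on multisegments: it changes the segment `[h,i-1]`
under the rightmost uncanceled ")" of `S_i(M)` into `[h,i]`, or adds a new
segment `[i,i]` if there is no uncanceled ")". -/
def fM (i : ℕ) (M : MS) : MS :=
  match lastCl (Si M i) with
  | some s => M.erase s + {(s.1, i)}
  | none => M + {(i, i)}

/-- The crystal operator `e_i` on multisegments: it changes the segment `[h,i]`
under the leftmost uncanceled "(" of `S_i(M)` into `[h,i-1]` (deleting it when
`h = i`), or returns `none` (i.e. `0`) if there is no uncanceled "(". -/
def eM (i : ℕ) (M : MS) : Option MS :=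
  match headOp (Si M i) with
  | some s => some (if s.1 = i then M.erase s else M.erase s + {(s.1, i - 1)})
  | none => none

/-- The operator `f_i^*`: it changes the segment `[i+1,j]` under the rightmost
uncanceled ")" of `S_i^*(M)` into `[i,j]`, or adds `[i,i]` if there is none. -/
def fMStar (n i : ℕ) (M : MS) : MS :=
  match lastCl (SiStar n M i) with
  | some s => M.erase s + {(i, s.2)}
  | none => M + {(i, i)}

/-- The operator `e_i^*`: it changes the segment `[i,j]` under the leftmost
uncanceled "(" of `S_i^*(M)` into `[i+1,j]` (deleting it when `j = i`), or
returns `none` if there is no uncanceled "(". -/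
def eMStar (n i : ℕ) (M : MS) : Option MS :=
  match headOp (SiStar n M i) with
  | some s => some (if s.2 = i then M.erase s else M.erase s + {(i + 1, s.2)})
  | none => none

/-- The number of boxes labeled `j` in `M`: each segment `[a,b]` contains one
box labeled `j` for each `a ≤ j ≤ b`. -/
def boxes (M : MS) (j : ℕ) : ℕ :=
  (M.filter (fun s => s.1 ≤ j ∧ j ≤ s.2)).card

/-- The pairing `⟨wt(M), α_i^∨⟩ = #(boxes i-1) + #(boxes i+1) - 2 #(boxes i)`. -/
def wtPair (M : MS) (i : ℕ) : ℤ :=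
  (boxes M (i - 1) : ℤ) + (boxes M (i + 1) : ℤ) - 2 * (boxes M i : ℤ)


-- counting brackets
def cntOp {τ : Type} (l : List (Br × τ)) : ℕ := l.countP (fun p => p.1 = Br.op)
def cntCl {τ : Type} (l : List (Br × τ)) : ℕ := l.countP (fun p => p.1 = Br.cl)

lemma balance {τ : Type} (l : List (Br × τ)) : ∀ (cls ops : List τ),
    (l.foldl step (cls, ops)).2.length + cls.length + cntCl l
    = (l.foldl step (cls, ops)).1.length + ops.length + cntOp l := by
  induction l with
  | nil => intro cls ops; simp [cntCl, cntOp]; omega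
  | cons hd tl ih =>
    rintro cls ops
    obtain ⟨br, s⟩ := hd
    cases br with
    | op =>
      have := ih cls (ops ++ [s])
      simp only [List.foldl_cons, step, cntCl, cntOp, List.countP_cons] at *
      simp at *
      omega
    | cl =>
      simp only [List.foldl_cons, step, cntCl, cntOp, List.countP_cons]
      by_cases he : ops.isEmpty
      · have := ih (cls ++ [s]) ops
        simp only [he, if_true, cntCl, cntOp] at *
        simp at *
        omega
      · have := ih cls ops.dropLast
        have hlen : ops.dropLast.length = ops.length - 1 := List.length_dropLast
        have hpos : 0 < ops.length := by
          cases ops with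
          | nil => simp at he
          | cons a t => simp
        simp only [he, if_false, cntCl, cntOp] at *
        simp at *
        omega

lemma balance' {τ : Type} (l : List (Br × τ)) :
    epsStr l + cntCl l = urStr l + cntOp l := by
  simpa [epsStr, urStr, scan] using balance l [] []

lemma foldl_cls {τ : Type} (l : List (Br × τ)) : ∀ (cls ops : List τ),
    l.foldl step (cls, ops) = (cls ++ (l.foldl step ([], ops)).1, (l.foldl step ([], ops)).2) := by
  induction l with
  | nil => intro cls ops; simp
  | cons hd tl ih =>
    rintro cls ops
    obtain ⟨br, s⟩ := hd
    cases br with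
    | op => simpa only [List.foldl_cons, step] using ih cls (ops ++ [s])
    | cl =>
      simp only [List.foldl_cons, step]
      by_cases he : ops.isEmpty
      · simp only [he, if_true, List.nil_append]
        rw [ih (cls ++ [s]) ops, ih [s] ops, List.append_assoc]
      · simp only [he, if_false]
        exact ih cls ops.dropLast

lemma foldl_consop {τ : Type} (l : List (Br × τ)) : ∀ (s : τ) (ops : List τ),
    l.foldl step ([], s :: ops)
    = if (l.foldl step ([], ops)).1.isEmpty then ([], s :: (l.foldl step ([], ops)).2)
      else ((l.foldl step ([], ops)).1.tail, (l.foldl step ([], ops)).2) := by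
  induction l with
  | nil => intro s ops; simp
  | cons hd tl ih =>
    rintro s ops
    obtain ⟨br, a⟩ := hd
    cases br with
    | op =>
      simp only [List.foldl_cons, step]
      have : s :: ops ++ [a] = s :: (ops ++ [a]) := by simp
      rw [this]
      exact ih s (ops ++ [a])
    | cl =>
      simp only [List.foldl_cons, step]
      cases ops with
      | nil =>
        simp only [List.isEmpty_nil, if_true, List.isEmpty_cons, List.dropLast_singleton,
          List.nil_append, Bool.and_false, Bool.false_eq_true, if_false]
        rw [foldl_cls tl [a] []]
        have hne : ∀ (P : List τ), ¬ (([a] ++ P).isEmpty = true) := by intro P; simp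
        rw [if_neg (hne _)]
        simp
      | cons o t =>
        simp only [List.isEmpty_cons, Bool.false_eq_true, if_false]
        have hd1 : (s :: o :: t).dropLast = s :: (o :: t).dropLast := by simp
        rw [hd1]
        exact ih s (o :: t).dropLast

lemma epsStr_cons_op {τ : Type} (l : List (Br × τ)) (s : τ) (h : 1 ≤ urStr l) :
    epsStr ((Br.op, s) :: l) = epsStr l := by
  have hne : ¬ ((l.foldl step ([], [])).1.isEmpty = true) := by
    intro hh; rw [urStr, scan] at h
    rw [List.isEmpty_iff] at hh; rw [hh] at h; simp at h
  simp only [epsStr, scan, List.foldl_cons, step, List.nil_append]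
  rw [show ([s] : List τ) = s :: [] from rfl, foldl_consop l s [], if_neg hne]

lemma mem_scan_cls {τ : Type} (l : List (Br × τ)) : ∀ (cls ops : List τ) (x : τ),
    x ∈ (l.foldl step (cls, ops)).1 → x ∈ cls ∨ (Br.cl, x) ∈ l := by
  induction l with
  | nil => intro cls ops x hx; simp at hx; exact Or.inl hx
  | cons hd tl ih =>
    rintro cls ops x hx
    obtain ⟨br, a⟩ := hd
    cases br with
    | op =>
      simp only [List.foldl_cons, step] at hx
      rcases ih cls (ops ++ [a]) x hx with h | h
      · exact Or.inl h
      · exact Or.inr (List.mem_cons_of_mem _ h)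
    | cl =>
      simp only [List.foldl_cons, step] at hx
      by_cases he : ops.isEmpty
      · rw [if_pos he] at hx
        rcases ih (cls ++ [a]) ops x hx with h | h
        · rcases List.mem_append.mp h with h | h
          · exact Or.inl h
          · simp at h; subst h; exact Or.inr List.mem_cons_self
        · exact Or.inr (List.mem_cons_of_mem _ h)
      · rw [if_neg he] at hx
        rcases ih cls ops.dropLast x hx with h | h
        · exact Or.inl h
        · exact Or.inr (List.mem_cons_of_mem _ h)

lemma lastCl_mem {τ : Type} (l : List (Br × τ)) (s : τ) (h : lastCl l = some s) :
    (Br.cl, s) ∈ l := by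
  have hm : s ∈ (scan l).1 := List.mem_of_mem_getLast? h
  rcases mem_scan_cls l [] [] s hm with h | h
  · simp at h
  · exact h

lemma lastCl_none {τ : Type} (l : List (Br × τ)) (h : lastCl l = none) : urStr l = 0 := by
  have : (scan l).1 = [] := by simpa [lastCl] using h
  simp [urStr, this]

-- ====== counting lemmas ======

lemma countP_flatMap {α β : Type*} (L : List α) (f : α → List β) (p : β → Bool) :
    (L.flatMap f).countP p = (L.map (fun a => (f a).countP p)).sum := by
  induction L with
  | nil => simp
  | cons a L ih => simp [List.countP_append, ih]

lemma list_sum_range (n : ℕ) (f : ℕ → ℕ) :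
    ((List.range n).map f).sum = ∑ x ∈ Finset.range n, f x := by
  induction n with
  | zero => simp
  | succ n ih => simp [List.range_succ, Finset.sum_range_succ, ih]

lemma cntOp_Si (M : MS) (i : ℕ) :
    cntOp (Si M i) = ∑ t0 ∈ Finset.range i, M.count (i - (t0+1) + 1, i) := by
  simp only [Si, cntOp]
  rw [countP_flatMap, list_sum_range]
  refine Finset.sum_congr rfl (fun t0 _ => ?_)
  simp [List.countP_append, List.countP_replicate]

lemma cntCl_Si (M : MS) (i : ℕ) :
    cntCl (Si M i) = ∑ t0 ∈ Finset.range i, M.count (i - (t0+1), i - 1) := by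
  simp only [Si, cntCl]
  rw [countP_flatMap, list_sum_range]
  refine Finset.sum_congr rfl (fun t0 _ => ?_)
  simp [List.countP_append, List.countP_replicate]

lemma cntOp_SiStar (n : ℕ) (M : MS) (i : ℕ) :
    cntOp (SiStar n M i) = ∑ t0 ∈ Finset.range n, M.count (i, i + (t0+1) - 1) := by
  simp only [SiStar, cntOp]
  rw [countP_flatMap, list_sum_range]
  refine Finset.sum_congr rfl (fun t0 _ => ?_)
  simp [List.countP_append, List.countP_replicate]

lemma cntCl_SiStar (n : ℕ) (M : MS) (i : ℕ) :
    cntCl (SiStar n M i) = ∑ t0 ∈ Finset.range n, M.count (i + 1, i + (t0+1)) := by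
  simp only [SiStar, cntCl]
  rw [countP_flatMap, list_sum_range]
  refine Finset.sum_congr rfl (fun t0 _ => ?_)
  simp [List.countP_append, List.countP_replicate]

lemma sum_count_eq_countP (k : ℕ → Seg) (m : ℕ) (p : Seg → Prop) [DecidablePred p]
    (h1 : ∀ t0 < m, p (k t0))
    (h2 : ∀ s, p s → ∃ t0, t0 < m ∧ k t0 = s ∧ ∀ t1 < m, k t1 = s → t1 = t0)
    (M : MS) :
    ∑ t0 ∈ Finset.range m, M.count (k t0) = M.countP p := by
  induction M using Multiset.induction_on with
  | empty => simp
  | cons a M ih =>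
    simp only [Multiset.count_cons, Multiset.countP_cons, Finset.sum_add_distrib, ih]
    congr 1
    by_cases hpa : p a
    · obtain ⟨t0, ht0, hk, huniq⟩ := h2 a hpa
      have : ∀ x ∈ Finset.range m, (if k x = a then 1 else 0) = if x = t0 then 1 else 0 := by
        intro x hx
        rw [Finset.mem_range] at hx
        by_cases hxa : k x = a
        · rw [if_pos hxa, if_pos (huniq x hx hxa)]
        · rw [if_neg hxa, if_neg (fun hh => hxa (by rw [hh]; exact hk))]
      rw [Finset.sum_congr rfl this, Finset.sum_ite_eq' (Finset.range m) t0 (fun _ => 1),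
        if_pos (Finset.mem_range.mpr ht0), if_pos hpa]
    · rw [if_neg hpa]
      refine Finset.sum_eq_zero (fun x hx => ?_)
      rw [Finset.mem_range] at hx
      rw [if_neg (fun hh => hpa (by rw [← hh]; exact h1 x hx))]

lemma cntOp_Si_eq (M : MS) (i : ℕ) (hi : 1 ≤ i) :
    cntOp (Si M i) = M.countP (fun s => s.2 = i ∧ 1 ≤ s.1 ∧ s.1 ≤ i) := by
  rw [cntOp_Si]
  refine sum_count_eq_countP _ _ _ (fun t0 ht0 => ?_) (fun s hs => ?_) M
  · exact ⟨rfl, by omega, by omega⟩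
  · obtain ⟨h2, h3, h4⟩ := hs
    refine ⟨i - s.1, by omega, ?_, fun t1 ht1 hk1 => ?_⟩
    · rw [Prod.ext_iff]; constructor
      · simp only; omega
      · simp only [h2]
    · rw [Prod.ext_iff] at hk1; simp only at hk1; omega

lemma cntCl_Si_eq (M : MS) (i : ℕ) (hi : 1 ≤ i) :
    cntCl (Si M i) = M.countP (fun s => s.2 = i - 1 ∧ s.1 ≤ i - 1) := by
  rw [cntCl_Si]
  refine sum_count_eq_countP _ _ _ (fun t0 ht0 => ?_) (fun s hs => ?_) M
  · exact ⟨rfl, by omega⟩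
  · obtain ⟨h2, h3⟩ := hs
    refine ⟨i - 1 - s.1, by omega, ?_, fun t1 ht1 hk1 => ?_⟩
    · rw [Prod.ext_iff]; constructor
      · simp only; omega
      · simp only [h2]
    · rw [Prod.ext_iff] at hk1; simp only at hk1; omega

lemma cntOp_SiStar_eq (n : ℕ) (M : MS) (i : ℕ) (hn : 1 ≤ n) :
    cntOp (SiStar n M i) = M.countP (fun s => s.1 = i ∧ i ≤ s.2 ∧ s.2 ≤ i + n - 1) := by
  rw [cntOp_SiStar]
  refine sum_count_eq_countP _ _ _ (fun t0 ht0 => ?_) (fun s hs => ?_) M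
  · exact ⟨rfl, by omega, by omega⟩
  · obtain ⟨h2, h3, h4⟩ := hs
    refine ⟨s.2 - i, by omega, ?_, fun t1 ht1 hk1 => ?_⟩
    · rw [Prod.ext_iff]; constructor
      · simp only [h2]
      · simp only; omega
    · rw [Prod.ext_iff] at hk1; simp only at hk1; omega

lemma cntCl_SiStar_eq (n : ℕ) (M : MS) (i : ℕ) :
    cntCl (SiStar n M i) = M.countP (fun s => s.1 = i + 1 ∧ i + 1 ≤ s.2 ∧ s.2 ≤ i + n) := by
  rw [cntCl_SiStar]
  refine sum_count_eq_countP _ _ _ (fun t0 ht0 => ?_) (fun s hs => ?_) M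
  · exact ⟨rfl, by omega, by omega⟩
  · obtain ⟨h2, h3, h4⟩ := hs
    refine ⟨s.2 - i - 1, by omega, ?_, fun t1 ht1 hk1 => ?_⟩
    · rw [Prod.ext_iff]; constructor
      · simp only [h2]
      · simp only; omega
    · rw [Prod.ext_iff] at hk1; simp only at hk1; omega

lemma boxes_eq (M : MS) (j : ℕ) :
    boxes M j = M.countP (fun s => s.1 ≤ j ∧ j ≤ s.2) := by
  rw [boxes, ← Multiset.countP_eq_card_filter]

lemma master (n i : ℕ) (hi : 1 ≤ i) (hin : i ≤ n) :
    ∀ (M : MS), IsMS n M →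
    cntOp (Si M i) + cntOp (SiStar n M i) + boxes M (i - 1) + boxes M (i + 1)
    = cntCl (Si M i) + cntCl (SiStar n M i) + 2 * boxes M i := by
  intro M hM
  rw [cntOp_Si_eq M i hi, cntCl_Si_eq M i hi, cntOp_SiStar_eq n M i (le_trans hi hin),
    cntCl_SiStar_eq n M i, boxes_eq, boxes_eq, boxes_eq]
  induction M using Multiset.induction_on with
  | empty => simp
  | cons a M ih =>
    have ha := hM a (Multiset.mem_cons_self a M)
    have hM' : IsMS n M := fun s hs => hM s (Multiset.mem_cons_of_mem hs)
    obtain ⟨ha1, ha2, ha3⟩ := ha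
    have hih := ih hM'
    simp only [Multiset.countP_cons]
    split_ifs <;> omega

-- ====== structural lemmas ======

lemma flatMap_congr {α β : Type*} (L : List α) (f g : α → List β)
    (h : ∀ a ∈ L, f a = g a) : L.flatMap f = L.flatMap g := by
  induction L with
  | nil => simp
  | cons a L ih => simp only [List.flatMap_cons, h a List.mem_cons_self,
      ih (fun x hx => h x (List.mem_cons_of_mem _ hx))]

lemma Si_congr (M M' : MS) (i : ℕ)
    (h : ∀ a, M.count (a, i) = M'.count (a, i) ∧ M.count (a, i-1) = M'.count (a, i-1)) :
    Si M i = Si M' i := by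
  simp only [Si]
  refine flatMap_congr _ _ _ (fun t0 _ => ?_)
  rw [(h _).1, (h _).2]

lemma SiStar_congr (n : ℕ) (M M' : MS) (i : ℕ)
    (h : ∀ j, M.count (i, j) = M'.count (i, j) ∧ M.count (i+1, j) = M'.count (i+1, j)) :
    SiStar n M i = SiStar n M' i := by
  simp only [SiStar]
  refine flatMap_congr _ _ _ (fun t0 _ => ?_)
  rw [(h _).1, (h _).2]



lemma Si_insert_ii (i : ℕ) (hi : 1 ≤ i) (M : MS) :
    Si (M + ({((i : ℕ), (i : ℕ))} : MS)) i = (Br.op, ((i : ℕ), (i : ℕ))) :: Si M i := by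
  obtain ⟨i', rfl⟩ : ∃ i', i = i' + 1 := ⟨i - 1, by omega⟩
  simp only [Si, List.range_succ_eq_map, List.flatMap_cons]
  have htail : (List.map Nat.succ (List.range i')).flatMap (fun t0 =>
      List.replicate ((M + ({((i' + 1 : ℕ), (i' + 1 : ℕ))} : MS)).count (i' + 1 - (t0 + 1) + 1, i' + 1)) (Br.op, ((i' + 1 - (t0 + 1) + 1 : ℕ), i' + 1)) ++
      List.replicate ((M + ({((i' + 1 : ℕ), (i' + 1 : ℕ))} : MS)).count (i' + 1 - (t0 + 1), i' + 1 - 1)) (Br.cl, ((i' + 1 - (t0 + 1) : ℕ), i' + 1 - 1)))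
    = (List.map Nat.succ (List.range i')).flatMap (fun t0 =>
      List.replicate (M.count (i' + 1 - (t0 + 1) + 1, i' + 1)) (Br.op, ((i' + 1 - (t0 + 1) + 1 : ℕ), i' + 1)) ++
      List.replicate (M.count (i' + 1 - (t0 + 1), i' + 1 - 1)) (Br.cl, ((i' + 1 - (t0 + 1) : ℕ), i' + 1 - 1))) := by
    refine flatMap_congr _ _ _ (fun a ha => ?_)
    simp only [List.mem_map, List.mem_range] at ha
    obtain ⟨u, hu, rfl⟩ := ha
    have h1 : ((i' + 1 - (u.succ + 1) + 1 : ℕ), (i' + 1 : ℕ)) ≠ ((i' + 1 : ℕ), (i' + 1 : ℕ)) := by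
      simp only [ne_eq, Prod.mk.injEq, not_and]; intro hc; omega
    have h2 : ((i' + 1 - (u.succ + 1) : ℕ), (i' + 1 - 1 : ℕ)) ≠ ((i' + 1 : ℕ), (i' + 1 : ℕ)) := by
      simp only [ne_eq, Prod.mk.injEq]; intro hc; omega
    rw [Multiset.count_add, Multiset.count_add, Multiset.count_singleton,
      Multiset.count_singleton, if_neg h1, if_neg h2]
    simp
  rw [htail]
  have h3 : ((i' + 1 - (0 + 1) + 1 : ℕ), (i' + 1 : ℕ)) = ((i' + 1 : ℕ), (i' + 1 : ℕ)) := by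
    simp
  have h4 : ((i' + 1 - (0 + 1) : ℕ), (i' + 1 - 1 : ℕ)) ≠ ((i' + 1 : ℕ), (i' + 1 : ℕ)) := by
    simp only [ne_eq, Prod.mk.injEq]; intro hc; omega
  rw [h3, Multiset.count_add, Multiset.count_singleton, if_pos rfl,
    Multiset.count_add, Multiset.count_singleton, if_neg h4]
  simp [List.replicate_succ]

lemma SiStar_insert_ii (n i : ℕ) (hn : 1 ≤ n) (M : MS) :
    SiStar n (M + ({((i : ℕ), (i : ℕ))} : MS)) i = (Br.op, ((i : ℕ), (i : ℕ))) :: SiStar n M i := by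
  obtain ⟨n', rfl⟩ : ∃ n', n = n' + 1 := ⟨n - 1, by omega⟩
  simp only [SiStar, List.range_succ_eq_map, List.flatMap_cons]
  have htail : (List.map Nat.succ (List.range n')).flatMap (fun t0 =>
      List.replicate ((M + ({((i : ℕ), (i : ℕ))} : MS)).count (i, i + (t0 + 1) - 1)) (Br.op, ((i : ℕ), (i + (t0 + 1) - 1 : ℕ))) ++
      List.replicate ((M + ({((i : ℕ), (i : ℕ))} : MS)).count (i + 1, i + (t0 + 1))) (Br.cl, ((i + 1 : ℕ), (i + (t0 + 1) : ℕ))))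
    = (List.map Nat.succ (List.range n')).flatMap (fun t0 =>
      List.replicate (M.count (i, i + (t0 + 1) - 1)) (Br.op, ((i : ℕ), (i + (t0 + 1) - 1 : ℕ))) ++
      List.replicate (M.count (i + 1, i + (t0 + 1))) (Br.cl, ((i + 1 : ℕ), (i + (t0 + 1) : ℕ)))) := by
    refine flatMap_congr _ _ _ (fun a ha => ?_)
    simp only [List.mem_map, List.mem_range] at ha
    obtain ⟨u, hu, rfl⟩ := ha
    have h1 : ((i : ℕ), (i + (u.succ + 1) - 1 : ℕ)) ≠ ((i : ℕ), (i : ℕ)) := by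
      simp only [ne_eq, Prod.mk.injEq, true_and]; omega
    have h2 : ((i + 1 : ℕ), (i + (u.succ + 1) : ℕ)) ≠ ((i : ℕ), (i : ℕ)) := by
      simp only [ne_eq, Prod.mk.injEq]; intro hc; omega
    rw [Multiset.count_add, Multiset.count_add, Multiset.count_singleton,
      Multiset.count_singleton, if_neg h1, if_neg h2]
    simp
  rw [htail]
  have h3 : ((i : ℕ), (i + (0 + 1) - 1 : ℕ)) = ((i : ℕ), (i : ℕ)) := by simp
  have h4 : ((i + 1 : ℕ), (i + (0 + 1) : ℕ)) ≠ ((i : ℕ), (i : ℕ)) := by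
    simp only [ne_eq, Prod.mk.injEq]; intro hc; omega
  rw [h3, Multiset.count_add, Multiset.count_singleton, if_pos rfl,
    Multiset.count_add, Multiset.count_singleton, if_neg h4]
  simp [List.replicate_succ]

lemma lastCl_Si_spec (M : MS) (i : ℕ) (s : Seg) (h : lastCl (Si M i) = some s) :
    s ∈ M ∧ s.2 = i - 1 ∧ s.1 ≤ i - 1 ∧ s.1 < i := by
  have hm := lastCl_mem _ _ h
  simp only [Si, List.mem_flatMap, List.mem_range, List.mem_append, List.mem_replicate] at hm
  obtain ⟨t0, ht0, hcase⟩ := hm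
  rcases hcase with ⟨hne, heq⟩ | ⟨hne, heq⟩
  · exact absurd (congrArg Prod.fst heq) (by simp)
  · have hs : s = ((i - (t0 + 1) : ℕ), (i - 1 : ℕ)) := congrArg Prod.snd heq
    have hcount : M.count ((i - (t0 + 1) : ℕ), (i - 1 : ℕ)) ≠ 0 := hne
    have hmem : ((i - (t0 + 1) : ℕ), (i - 1 : ℕ)) ∈ M := by
      rw [← Multiset.count_pos]; omega
    subst hs
    exact ⟨hmem, rfl, by simp; omega, by simp; omega⟩

lemma lastCl_SiStar_spec (n : ℕ) (M : MS) (i : ℕ) (s : Seg)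
    (h : lastCl (SiStar n M i) = some s) :
    s ∈ M ∧ s.1 = i + 1 ∧ i + 1 ≤ s.2 := by
  have hm := lastCl_mem _ _ h
  simp only [SiStar, List.mem_flatMap, List.mem_range, List.mem_append, List.mem_replicate] at hm
  obtain ⟨t0, ht0, hcase⟩ := hm
  rcases hcase with ⟨hne, heq⟩ | ⟨hne, heq⟩
  · exact absurd (congrArg Prod.fst heq) (by simp)
  · have hs : s = ((i + 1 : ℕ), (i + (t0 + 1) : ℕ)) := congrArg Prod.snd heq
    have hcount : M.count ((i + 1 : ℕ), (i + (t0 + 1) : ℕ)) ≠ 0 := hne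
    have hmem : ((i + 1 : ℕ), (i + (t0 + 1) : ℕ)) ∈ M := by
      rw [← Multiset.count_pos]; omega
    subst hs
    exact ⟨hmem, rfl, by simp⟩

lemma key_ineq (n i : ℕ) (hi : 1 ≤ i) (hin : i ≤ n) (M : MS) (hM : IsMS n M)
    (h : 1 ≤ (epsStr (Si M i) : ℤ) + (epsStr (SiStar n M i) : ℤ) + wtPair M i) :
    1 ≤ urStr (Si M i) + urStr (SiStar n M i) := by
  have b1 := balance' (Si M i)
  have b2 := balance' (SiStar n M i)
  have hm := master n i hi hin M hM
  rw [wtPair] at h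
  omega


theorem stmt10 (n i : ℕ) (hi : 1 ≤ i) (hin : i ≤ n) (M : MS) (hM : IsMS n M)
    (h : 1 ≤ (epsStr (Si M i) : ℤ) + (epsStr (SiStar n M i) : ℤ) + wtPair M i) :
    epsStr (SiStar n (fM i M) i) = epsStr (SiStar n M i) ∧
    epsStr (Si (fMStar n i M) i) = epsStr (Si M i) := by
  have key := key_ineq n i hi hin M hM h
  have hcount : ∀ (N : MS) (s k : Seg), k ≠ s → ∀ b : Seg, k ≠ b →
      (N.erase s + ({b} : MS)).count k = N.count k := by
    intro N s k h1 b h2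
    rw [Multiset.count_add, Multiset.count_singleton, if_neg h2,
      Multiset.count_erase_of_ne h1, Nat.add_zero]
  constructor
  · cases hc : lastCl (Si M i) with
    | none =>
      have hu : urStr (Si M i) = 0 := lastCl_none _ hc
      have hu2 : 1 ≤ urStr (SiStar n M i) := by omega
      have hf : fM i M = M + ({((i : ℕ), (i : ℕ))} : MS) := by simp [fM, hc]
      rw [hf, SiStar_insert_ii n i (le_trans hi hin) M]
      exact epsStr_cons_op _ _ hu2
    | some s =>
      obtain ⟨hmem, hs2, hs1, hs1'⟩ := lastCl_Si_spec M i s hc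
      have hf : fM i M = M.erase s + ({(s.1, (i : ℕ))} : MS) := by simp [fM, hc]
      rw [hf]
      congr 1
      apply SiStar_congr
      intro j
      constructor
      · refine hcount M s ((i : ℕ), j) ?_ _ ?_
        · intro hk; rw [Prod.ext_iff] at hk; simp only at hk; omega
        · intro hk; rw [Prod.ext_iff] at hk; simp only at hk; omega
      · refine hcount M s ((i + 1 : ℕ), j) ?_ _ ?_
        · intro hk; rw [Prod.ext_iff] at hk; simp only at hk; omega
        · intro hk; rw [Prod.ext_iff] at hk; simp only at hk; omega
  · cases hc : lastCl (SiStar n M i) with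
    | none =>
      have hu : urStr (SiStar n M i) = 0 := lastCl_none _ hc
      have hu2 : 1 ≤ urStr (Si M i) := by omega
      have hf : fMStar n i M = M + ({((i : ℕ), (i : ℕ))} : MS) := by simp [fMStar, hc]
      rw [hf, Si_insert_ii i hi M]
      exact epsStr_cons_op _ _ hu2
    | some s =>
      obtain ⟨hmem, hs1, hs2⟩ := lastCl_SiStar_spec n M i s hc
      have hf : fMStar n i M = M.erase s + ({((i : ℕ), s.2)} : MS) := by simp [fMStar, hc]
      rw [hf]
      congr 1
      apply Si_congr
      intro a
      constructor
      · refine hcount M s (a, (i : ℕ)) ?_ _ ?_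
        · intro hk; rw [Prod.ext_iff] at hk; simp only at hk; omega
        · intro hk; rw [Prod.ext_iff] at hk; simp only at hk; omega
      · refine hcount M s (a, (i - 1 : ℕ)) ?_ _ ?_
        · intro hk; rw [Prod.ext_iff] at hk; simp only at hk; omega
        · intro hk; rw [Prod.ext_iff] at hk; simp only at hk; omega
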